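/- Let M be a loopless matroid and J a flat of rank k. Then OS^k ⊆ OS^k(J), where OS(J) is the ideal generated by the ∂F_I with I ⊆ J dependent together with the elements f_i for i ∉ J. In particular, for any dependent set Î of size k+1 and rank k, ∂F_{Î} ∈ OS^k(J). -/

import Mathlib

/- Shared definitions: exterior algebra pairing, basis vectors, boundary operator,
   and elementary matroid notions (rank, looplessness) not present in this Mathlib. -/

open ExteriorAlgebra

set_option maxHeartbeats 1000000
set_option synthInstance.maxHeartbeats 400000

open Classical in
/-- `e_S`: sum of the standard basis vectors of `ℤ^n` indexed by `S`. -/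
noncomputable def eS {n : ℕ} (S : Set (Fin n)) : Fin n → ℤ := fun j => if j ∈ S then 1 else 0

/-- the `i`-th standard basis vector of `ℤ^n`. -/
noncomputable def fb {n : ℕ} (i : Fin n) : Fin n → ℤ := Pi.single i 1

/-- The pairing of a pure `k`-fold wedge `v₁ ∧ ... ∧ v_k` of vectors of `V` with the
exterior algebra of the dual module, determined by
`⟨w₁ ∧ ... ∧ w_k, v₁ ∧ ... ∧ v_k⟩ = det (wᵢ (vⱼ))` on the degree-`k` part and `0` on
other degrees. -/
noncomputable def pairPure {V : Type*} [AddCommGroup V] [Module ℤ V] (k : ℕ)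
    (v : Fin k → V) : ExteriorAlgebra ℤ (Module.Dual ℤ V) →ₗ[ℤ] ℤ :=
  ExteriorAlgebra.liftAlternating fun m =>
    if h : m = k then
      h ▸ (Matrix.detRowAlternating.compLinearMap
        (LinearMap.pi fun j : Fin k => LinearMap.applyₗ (v j)))
    else 0

/-- A matroid is loopless if every singleton of the ground set is independent. -/
def Matroid.Loopless' {α : Type*} (M : Matroid α) : Prop := ∀ x ∈ M.E, M.Indep {x}

/-- The rank of a set in a matroid: the largest cardinality of an independent subset. -/
noncomputable def Matroid.rk' {α : Type*} (M : Matroid α) (X : Set α) : ℕ :=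
  sSup {m : ℕ | ∃ I, I ⊆ X ∧ M.Indep I ∧ I.ncard = m}

/-- The boundary operator `∂` on `⋀^• W` for `W = ℤ^n` with basis `f_i`:
interior multiplication by the functional sending each `f_i` to `1`.  It is the odd
derivation with `∂ f_i = 1`. -/
noncomputable def bnd (n : ℕ) :
    ExteriorAlgebra ℤ (Fin n → ℤ) →ₗ[ℤ] ExteriorAlgebra ℤ (Fin n → ℤ) :=
  CliffordAlgebra.contractLeft (∑ i : Fin n, LinearMap.proj i)

/-- `F_I = f_{i₀} ∧ ... ∧ f_{i_k}` for a finite subset `I` (in increasing order). -/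
noncomputable def FI {n : ℕ} (I : Finset (Fin n)) : ExteriorAlgebra ℤ (Fin n → ℤ) :=
  ιMulti ℤ I.card fun j => fb ((I.orderIsoOfFin rfl j : I) : Fin n)

/-- The Orlik-Solomon ideal: the two-sided ideal (equivalently, the `ℤ`-span of all
`x * ∂F_I * y`) generated by the `∂ F_I` over dependent sets `I` of the matroid `M`. -/
noncomputable def OSideal {n : ℕ} (M : Matroid (Fin n)) :
    Submodule ℤ (ExteriorAlgebra ℤ (Fin n → ℤ)) :=
  Submodule.span ℤ {z | ∃ x, ∃ y, ∃ I : Finset (Fin n),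
    M.Dep (I : Set (Fin n)) ∧ z = x * bnd n (FI I) * y}

/-- The restricted Orlik-Solomon ideal `OS(J)`: the two-sided ideal generated by the
`∂F_I` for dependent `I ⊆ J` together with the `f_i` for `i ∉ J`. -/
noncomputable def OSJ {n : ℕ} (M : Matroid (Fin n)) (J : Set (Fin n)) :
    Submodule ℤ (ExteriorAlgebra ℤ (Fin n → ℤ)) :=
  Submodule.span ℤ {z | ∃ x, ∃ y, ∃ g,
    ((∃ I : Finset (Fin n), (I : Set (Fin n)) ⊆ J ∧ M.Dep (I : Set (Fin n)) ∧
        g = bnd n (FI I)) ∨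
      (∃ i, i ∉ J ∧ g = ExteriorAlgebra.ι ℤ (fb i))) ∧ z = x * g * y}

section Aux

open ExteriorAlgebra

variable {n : ℕ}

/-- wedge of basis vectors along a list -/
noncomputable def FLaux (L : List (Fin n)) : ExteriorAlgebra ℤ (Fin n → ℤ) :=
  (L.map fun i => ι ℤ (fb i)).prod

lemma FLaux_nil : FLaux ([] : List (Fin n)) = 1 := rfl

lemma FLaux_cons (a : Fin n) (L : List (Fin n)) :
    FLaux (a :: L) = ι ℤ (fb a) * FLaux L := by
  simp [FLaux]

lemma sum_proj_fb (a : Fin n) :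
    (∑ i : Fin n, LinearMap.proj (R := ℤ) (φ := fun _ : Fin n => ℤ) i) (fb a) = 1 := by
  simp [fb, LinearMap.proj, Pi.single_apply]

lemma bnd_ι_mul (a : Fin n) (x : ExteriorAlgebra ℤ (Fin n → ℤ)) :
    bnd n (ι ℤ (fb a) * x) = x - ι ℤ (fb a) * bnd n x := by
  show CliffordAlgebra.contractLeft _ _ = _
  rw [CliffordAlgebra.contractLeft_ι_mul, sum_proj_fb, one_smul]
  rfl

lemma bnd_one : bnd n (1 : ExteriorAlgebra ℤ (Fin n → ℤ)) = 0 :=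
  CliffordAlgebra.contractLeft_one _ _

lemma FLaux_perm {L L' : List (Fin n)} (h : L.Perm L') :
    FLaux L = FLaux L' ∨ FLaux L = -FLaux L' := by
  induction h with
  | nil => exact Or.inl rfl
  | cons a _ ih =>
    rcases ih with h | h
    · exact Or.inl (by rw [FLaux_cons, h, FLaux_cons])
    · exact Or.inr (by rw [FLaux_cons, h, mul_neg, FLaux_cons])
  | swap a b l =>
    refine Or.inr ?_
    rw [FLaux_cons, FLaux_cons, FLaux_cons, FLaux_cons, ← mul_assoc, ← mul_assoc]
    have h := ι_add_mul_swap (R := ℤ) (fb b) (fb a)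
    rw [eq_neg_of_add_eq_zero_left h, neg_mul]
  | trans _ _ ih1 ih2 =>
    rcases ih1 with h1 | h1 <;> rcases ih2 with h2 | h2 <;>
      simp [h1, h2]

lemma FLaux_dup {L : List (Fin n)} (h : ¬ L.Nodup) : FLaux L = 0 := by
  classical
  rw [List.nodup_iff_count_le_one] at h
  push_neg at h
  obtain ⟨a, ha⟩ := h
  have h1 : a ∈ L := List.count_pos_iff.1 (by omega)
  have p1 := List.perm_cons_erase h1
  have h2 : a ∈ L.erase a := by
    rw [← List.count_pos_iff, List.count_erase_self]; omega
  have p2 := List.perm_cons_erase h2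
  have p : L.Perm (a :: a :: (L.erase a).erase a) := p1.trans (p2.cons a)
  have h0 : FLaux (a :: a :: (L.erase a).erase a) = 0 := by
    rw [FLaux_cons, FLaux_cons, ← mul_assoc, ι_sq_zero, zero_mul]
  rcases FLaux_perm p with h | h <;> simp [h, h0]

lemma bnd_FLaux (L : List (Fin n)) :
    bnd n (FLaux L) =
      ∑ j : Fin L.length, ((-1 : ℤ) ^ (j : ℕ)) • FLaux (L.eraseIdx j) := by
  induction L with
  | nil => simp [FLaux_nil, bnd_one]
  | cons a L ih =>
    rw [FLaux_cons, bnd_ι_mul, ih, Finset.mul_sum]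
    simp only [List.length_cons]
    rw [Fin.sum_univ_succ]
    simp only [List.eraseIdx_cons_zero, List.eraseIdx_cons_succ, Fin.val_zero, pow_zero,
      one_smul, Fin.val_succ, pow_succ, mul_smul_comm, FLaux_cons]
    rw [sub_eq_add_neg, ← Finset.sum_neg_distrib]
    congr 1
    refine Finset.sum_congr rfl fun j _ => ?_
    rw [mul_neg_one, neg_smul]

lemma FI_eq_FLaux (T : Finset (Fin n)) : FI T = FLaux (T.sort (· ≤ ·)) := by
  rw [FI, ιMulti_apply, FLaux]
  congr 1
  apply List.ext_getElem
  · simp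
  · intro i h1 h2
    simp only [List.getElem_ofFn, List.getElem_map]
    congr 2

section OSJlemmas

variable {M : Matroid (Fin n)} {J : Set (Fin n)}

lemma gen_dep {T : Finset (Fin n)} (h1 : (T : Set (Fin n)) ⊆ J) (h2 : M.Dep (T : Set (Fin n)))
    (x y : ExteriorAlgebra ℤ (Fin n → ℤ)) : x * bnd n (FI T) * y ∈ OSJ M J :=
  Submodule.subset_span ⟨x, y, _, Or.inl ⟨T, h1, h2, rfl⟩, rfl⟩

lemma gen_out {i : Fin n} (h : i ∉ J) (x y : ExteriorAlgebra ℤ (Fin n → ℤ)) :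
    x * ι ℤ (fb i) * y ∈ OSJ M J :=
  Submodule.subset_span ⟨x, y, _, Or.inr ⟨i, h, rfl⟩, rfl⟩

lemma OSJ_mul (x y : ExteriorAlgebra ℤ (Fin n → ℤ)) {z : ExteriorAlgebra ℤ (Fin n → ℤ)}
    (hz : z ∈ OSJ M J) : x * z * y ∈ OSJ M J := by
  induction hz using Submodule.span_induction with
  | mem z hz =>
    obtain ⟨x', y', g, hg, rfl⟩ := hz
    exact Submodule.subset_span ⟨x * x', y' * y, g, hg, by simp [mul_assoc]⟩
  | zero => simpa using Submodule.zero_mem _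
  | add a b _ _ ha hb =>
    have : x * (a + b) * y = x * a * y + x * b * y := by
      rw [mul_add, add_mul]
    rw [this]; exact Submodule.add_mem _ ha hb
  | smul c a _ ha =>
    have : x * (c • a) * y = c • (x * a * y) := by
      rw [mul_smul_comm, smul_mul_assoc]
    rw [this]; exact Submodule.smul_mem _ _ ha

lemma FLaux_mem_of_out (L : List (Fin n)) (i : Fin n) (hiL : i ∈ L) (hiJ : i ∉ J) :
    FLaux L ∈ OSJ M J := by
  classical
  have p := List.perm_cons_erase hiL
  have hmem : FLaux (i :: L.erase i) ∈ OSJ M J := by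
    have h := gen_out (M := M) hiJ 1 (FLaux (L.erase i))
    rw [one_mul] at h
    rw [FLaux_cons]
    exact h
  rcases FLaux_perm p with h | h
  · rw [h]; exact hmem
  · rw [h]; exact Submodule.neg_mem _ hmem

lemma FLaux_mem_of_dep_subset (L : List (Fin n)) (hnd : L.Nodup)
    (hsub : (L.toFinset : Set (Fin n)) ⊆ J) (hdep : M.Dep (L.toFinset : Set (Fin n))) :
    FLaux L ∈ OSJ M J := by
  classical
  obtain ⟨j, hj⟩ : ∃ j, j ∈ L := by
    cases L with
    | nil => exact absurd (by simpa using M.empty_indep) (by simpa using hdep.1)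
    | cons a L => exact ⟨a, List.mem_cons_self⟩
  have hsort : L.Perm (L.toFinset.sort (· ≤ ·)) :=
    List.perm_of_nodup_nodup_toFinset_eq hnd (Finset.sort_nodup _ _)
      (by rw [Finset.sort_toFinset])
  have hdupl : FLaux (j :: L) = 0 := FLaux_dup (by simp [List.nodup_cons, hj])
  have h1 : bnd n (FLaux (j :: L)) = FLaux L - ι ℤ (fb j) * bnd n (FLaux L) := by
    rw [FLaux_cons, bnd_ι_mul]
  rw [hdupl, map_zero] at h1
  have h2 : FLaux L = ι ℤ (fb j) * bnd n (FLaux L) := by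
    exact sub_eq_zero.mp h1.symm
  rcases FLaux_perm hsort with h | h
  · rw [h2, h, ← FI_eq_FLaux]
    have := gen_dep hsub hdep (ι ℤ (fb j)) 1
    rwa [mul_one] at this
  · rw [h2, h, ← FI_eq_FLaux, map_neg, mul_neg]
    exact Submodule.neg_mem _ (by
      have := gen_dep hsub hdep (ι ℤ (fb j)) 1
      rwa [mul_one] at this)

lemma FLaux_eraseIdx_mem (hJflat : M.IsFlat J) (hE : M.E = Set.univ)
    {S : Finset (Fin n)} (hdep : M.Dep (S : Set (Fin n)))
    {s : Fin n} (hsS : s ∈ S) (hsJ : s ∉ J)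
    {C : List (Fin n)} (hndC : C.Nodup) (hCS : C.toFinset = S) (j : ℕ) :
    FLaux (C.eraseIdx j) ∈ OSJ M J := by
  classical
  by_cases hout : ∃ t ∈ C.eraseIdx j, t ∉ J
  · obtain ⟨t, ht1, ht2⟩ := hout
    exact FLaux_mem_of_out _ t ht1 ht2
  · push_neg at hout
    have hmemC : ∀ t, t ∈ C ↔ t ∈ S := fun t => by rw [← hCS, List.mem_toFinset]
    have hsC : s ∈ C := (hmemC s).2 hsS
    have hse : s ∉ C.eraseIdx j := fun h => hsJ (hout s h)
    have hndW : (C.eraseIdx j).Nodup := hndC.sublist (List.eraseIdx_sublist C j)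
    have hWsub : ((C.eraseIdx j).toFinset : Set (Fin n)) ⊆ J := by
      intro t ht
      rw [Finset.mem_coe, List.mem_toFinset] at ht
      exact hout t ht
    have hWset : ((C.eraseIdx j).toFinset : Set (Fin n)) = (S : Set (Fin n)) \ {s} := by
      obtain ⟨is, hislt, hisval⟩ := List.mem_iff_getElem.mp hsC
      have hisj : is = j := by
        by_contra hne
        exact hse (List.mem_eraseIdx_iff_getElem.mpr ⟨is, hislt, hne, hisval⟩)
      ext t
      simp only [Set.mem_diff, Set.mem_singleton_iff, Finset.mem_coe, Finset.coe_sort_coe,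
        List.coe_toFinset, Set.mem_setOf_eq, List.mem_toFinset]
      constructor
      · intro htW
        exact ⟨(hmemC t).1 ((List.eraseIdx_sublist C j).subset htW),
          fun hts => hse (hts ▸ htW)⟩
      · rintro ⟨htS, hts⟩
        have htC : t ∈ C := (hmemC t).2 htS
        obtain ⟨it, hitlt, hitval⟩ := List.mem_iff_getElem.mp htC
        refine List.mem_eraseIdx_iff_getElem.mpr ⟨it, hitlt, ?_, hitval⟩
        intro hitj
        apply hts
        have hix : it = is := by omega
        subst hix
        exact hitval.symm.trans hisval
    refine FLaux_mem_of_dep_subset _ hndW hWsub ?_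
    rw [hWset]
    constructor
    · intro hind
      have hs_not : s ∉ (S : Set (Fin n)) \ {s} := by simp
      have hins : insert s ((S : Set (Fin n)) \ {s}) = (S : Set (Fin n)) := by
        rw [Set.insert_diff_singleton]
        exact Set.insert_eq_self.mpr (Finset.mem_coe.2 hsS)
      have hdep' : M.Dep (insert s ((S : Set (Fin n)) \ {s})) := by rw [hins]; exact hdep
      have hcl : s ∈ M.closure ((S : Set (Fin n)) \ {s}) :=
        (Matroid.Indep.mem_closure_iff_of_notMem hind hs_not).2 hdep'
      have hsubJ : (S : Set (Fin n)) \ {s} ⊆ J := hWset ▸ hWsub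
      have : s ∈ J := by
        have h1 := M.closure_subset_closure hsubJ hcl
        rwa [hJflat.closure] at h1
      exact hsJ this
    · rw [hE]; exact Set.subset_univ _

lemma bnd_FI_mem (hJflat : M.IsFlat J) (hE : M.E = Set.univ) (S : Finset (Fin n))
    (hdep : M.Dep (S : Set (Fin n))) : bnd n (FI S) ∈ OSJ M J := by
  classical
  by_cases hsub : (S : Set (Fin n)) ⊆ J
  · have h := gen_dep hsub hdep 1 1
    rwa [one_mul, mul_one] at h
  · obtain ⟨s, hsS, hsJ⟩ := Set.not_subset.mp hsub
    rw [FI_eq_FLaux, bnd_FLaux]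
    refine Submodule.sum_mem _ ?_
    intro j _
    refine Submodule.smul_mem _ _ ?_
    exact FLaux_eraseIdx_mem hJflat hE hdep (Finset.mem_coe.1 hsS) hsJ
      (Finset.sort_nodup _ _) (Finset.sort_toFinset _ _) j

lemma OS_le_OSJ (hJflat : M.IsFlat J) (hE : M.E = Set.univ) : OSideal M ≤ OSJ M J := by
  rw [OSideal, Submodule.span_le]
  rintro z ⟨x, y, I, hdep, rfl⟩
  exact OSJ_mul x y (bnd_FI_mem hJflat hE I hdep)

end OSJlemmas

end Aux



/-- For a flat `J` of rank `k` of a loopless matroid `M`, one has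
`OS^k ⊆ OS^k(J)`; in particular `∂F_Î ∈ OS^k(J)` for every dependent set `Î` of size
`k + 1` and rank `k`. -/
theorem stmt_10 {N : ℕ} (M : Matroid (Fin (N + 1))) (hM : M.Loopless')
    (hE : M.E = Set.univ) (k : ℕ) (J : Set (Fin (N + 1)))
    (hJ : M.IsFlat J) (hJk : M.rk' J = k) :
    (OSideal M ⊓ ⋀[ℤ]^k (Fin (N + 1) → ℤ) ≤ OSJ M J) ∧
    (∀ I : Finset (Fin (N + 1)), M.Dep (I : Set (Fin (N + 1))) → I.card = k + 1 →
      M.rk' (I : Set (Fin (N + 1))) = k → bnd (N + 1) (FI I) ∈ OSJ M J) := by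
  constructor
  · exact fun z hz => OS_le_OSJ hJ hE (Submodule.mem_inf.mp hz).1
  · intro I hdep _ _
    exact bnd_FI_mem hJ hE I hdep
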